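/- Let 𝔷 and Z_* be as in the context with 𝔷([k]) = ζ(-k) for every k ∈ ℕ, and let ζE and Z_EMS be as in the context. Then in ℂ⟦t_1, t_2⟧: Z_EMS(t_1, t_2) = Z_*(t_1 + t_2, t_2) + Z_*(t_2, t_1 + t_2) + Z_*(t_1 + 2 t_2). -/

import Mathlib

open scoped BigOperators

/-- The quasi-shuffle (harmonic) product of two words. -/
def qs {M : Type*} [AddCommMonoid M] : List M → List M → Multiset (List M)
  | [], w => {w}
  | a :: u, [] => {a :: u}
  | a :: u, b :: v =>
      (qs u (b :: v)).map (a :: ·) + (qs (a :: u) v).map (b :: ·) +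
        (qs u v).map (fun w => (a + b) :: w)
termination_by u v => u.length + v.length
decreasing_by all_goals (simp; try omega)

/-- The generating series `Z_*(u₁,…,u_m)` of `𝔷`, for power series `uⱼ`
with zero constant term; its coefficient at a monomial `d` is the (finite) sum
`∑_k 𝔷([k₁,…,k_m]) · coeff d (∏ⱼ (-uⱼ)^{kⱼ}/kⱼ!)`. -/
noncomputable def Zstar {n : ℕ} (z : List ℕ → ℂ) (u : List (MvPowerSeries (Fin n) ℂ)) :
    MvPowerSeries (Fin n) ℂ :=
  fun d => ∑ k ∈ Fintype.piFinset (fun _ : Fin u.length => Finset.range ((∑ i, d i) + 1)),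
    z (List.ofFn k) *
      MvPowerSeries.coeff d
        (∏ j : Fin u.length, (((k j).factorial : ℂ))⁻¹ • (-(u.get j)) ^ (k j))


/-- The generating series `Z_EMS(t₁,…,t_r) = ∑_k ζE(-k₁,…,-k_r) ∏ᵢ (-tᵢ)^{kᵢ}/kᵢ!`. -/
noncomputable def ZEMS (zE : List ℕ → ℂ) (r : ℕ) : MvPowerSeries (Fin r) ℂ :=
  fun d => zE (List.ofFn fun i : Fin r => d i) *
    ∏ i : Fin r, ((-1 : ℂ) ^ (d i) * ((d i).factorial : ℂ)⁻¹)

section Helpers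
open MvPowerSeries Finset

lemma natCast_eq_mono (c : ℕ) : (c : MvPowerSeries (Fin 2) ℂ) = monomial 0 (c:ℂ) := rfl

lemma fs2 (d : Fin 2 →₀ ℕ) (a b : ℕ) :
    d = Finsupp.single 0 a + Finsupp.single 1 b ↔ d 0 = a ∧ d 1 = b := by
  constructor
  · rintro rfl; simp [Finsupp.single_apply]
  · rintro ⟨h0, h1⟩; ext i; fin_cases i <;>
      simp [Finsupp.single_apply, ← h0, ← h1]

lemma expand_A (k0 k1 : ℕ) :
    (X 0 + X 1 : MvPowerSeries (Fin 2) ℂ) ^ k0 * X 1 ^ k1 =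
      ∑ i ∈ range (k0+1), monomial (Finsupp.single 0 i + Finsupp.single 1 (k0-i+k1))
        (k0.choose i : ℂ) := by
  rw [add_pow, Finset.sum_mul]
  refine Finset.sum_congr rfl fun i _ => ?_
  rw [X_pow_eq, X_pow_eq, X_pow_eq, natCast_eq_mono, monomial_mul_monomial,
    monomial_mul_monomial, monomial_mul_monomial]
  congr 1
  · rw [add_zero, add_assoc, ← Finsupp.single_add]
  · ring

lemma coeff_A (d : Fin 2 →₀ ℕ) (k0 k1 : ℕ) :
    (MvPowerSeries.coeff d) ((X 0 + X 1 : MvPowerSeries (Fin 2) ℂ) ^ k0 * X 1 ^ k1) =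
      if d 0 ≤ k0 ∧ d 0 + d 1 = k0 + k1 then (k0.choose (d 0) : ℂ) else 0 := by
  rw [expand_A, map_sum]
  simp only [coeff_monomial, fs2]
  have h : ∀ x ∈ range (k0+1),
      (if d 0 = x ∧ d 1 = k0 - x + k1 then (k0.choose x : ℂ) else 0) =
      if x = d 0 then (if d 0 ≤ k0 ∧ d 0 + d 1 = k0 + k1 then (k0.choose (d 0) : ℂ) else 0)
        else 0 := by
    intro x hx
    simp only [mem_range] at hx
    rcases eq_or_ne x (d 0) with rfl | hne
    · have hiff : (d 1 = k0 - d 0 + k1) ↔ (d 0 ≤ k0 ∧ d 0 + d 1 = k0 + k1) := by omega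
      simp [hiff]
    · rw [if_neg hne, if_neg]; rintro ⟨h1, -⟩; exact hne h1.symm
  rw [Finset.sum_congr rfl h, Finset.sum_ite_eq' (range (k0+1)) (d 0)]
  by_cases hd : d 0 ≤ k0 <;> simp [Nat.lt_succ_iff, hd]

lemma coeff_B (d : Fin 2 →₀ ℕ) (k0 k1 : ℕ) :
    (MvPowerSeries.coeff d) ((X 1 : MvPowerSeries (Fin 2) ℂ) ^ k0 * (X 0 + X 1) ^ k1) =
      if d 0 ≤ k1 ∧ d 0 + d 1 = k0 + k1 then (k1.choose (d 0) : ℂ) else 0 := by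
  rw [mul_comm, coeff_A]
  congr 1
  · simp only [eq_iff_iff]; constructor <;> rintro ⟨h1, h2⟩ <;> exact ⟨h1, by omega⟩

lemma expand_C (k : ℕ) :
    (X 0 + 2 * X 1 : MvPowerSeries (Fin 2) ℂ) ^ k =
      ∑ i ∈ range (k+1), monomial (Finsupp.single 0 i + Finsupp.single 1 (k-i))
        ((k.choose i : ℂ) * 2^(k-i)) := by
  rw [add_pow]
  refine Finset.sum_congr rfl fun i _ => ?_
  rw [mul_pow, X_pow_eq, X_pow_eq]
  have h2 : (2 : MvPowerSeries (Fin 2) ℂ) ^ (k - i) = monomial 0 ((2:ℂ)^(k-i)) := by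
    have h3 : (2 : MvPowerSeries (Fin 2) ℂ) = (C 2 : MvPowerSeries (Fin 2) ℂ) := by rw [map_ofNat]
    rw [h3, ← map_pow, ← monomial_zero_eq_C_apply]
  rw [h2, natCast_eq_mono, monomial_mul_monomial, monomial_mul_monomial, monomial_mul_monomial]
  congr 1
  · simp
  · ring

lemma coeff_Cx (d : Fin 2 →₀ ℕ) (k : ℕ) :
    (MvPowerSeries.coeff d) ((X 0 + 2 * X 1 : MvPowerSeries (Fin 2) ℂ) ^ k) =
      if d 0 + d 1 = k then (k.choose (d 0) : ℂ) * 2 ^ (d 1) else 0 := by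
  rw [expand_C, map_sum]
  simp only [coeff_monomial, fs2]
  have h : ∀ x ∈ range (k+1),
      (if d 0 = x ∧ d 1 = k - x then (k.choose x : ℂ) * 2^(k-x) else 0) =
      if x = d 0 then (if d 0 + d 1 = k then (k.choose (d 0) : ℂ) * 2 ^ (d 1) else 0)
        else 0 := by
    intro x hx
    simp only [mem_range] at hx
    rcases eq_or_ne x (d 0) with rfl | hne
    · rw [if_pos rfl]
      by_cases hc : d 0 + d 1 = k
      · have h1 : d 1 = k - d 0 := by omega
        rw [if_pos ⟨rfl, h1⟩, if_pos hc, h1]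
      · rw [if_neg, if_neg hc]; rintro ⟨-, h1⟩; omega
    · rw [if_neg hne, if_neg]; rintro ⟨h1, -⟩; exact hne h1.symm
  rw [Finset.sum_congr rfl h, Finset.sum_ite_eq' (range (k+1)) (d 0)]
  by_cases hd : d 0 ≤ k
  · simp [Nat.lt_succ_iff, hd]
  · have h1 : ¬(d 0 + d 1 = k) := by omega
    simp [Nat.lt_succ_iff, hd, h1]

lemma sum_piFinset_two {β : Type*} [AddCommMonoid β] (n : ℕ) (f : (Fin 2 → ℕ) → β) :
    ∑ k ∈ Fintype.piFinset (fun _ : Fin 2 => range n), f k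
      = ∑ p ∈ range n ×ˢ range n, f ![p.1, p.2] := by
  refine Finset.sum_nbij' (fun k => (k 0, k 1)) (fun p => ![p.1, p.2]) ?_ ?_ ?_ ?_ ?_
  · intro k hk; simp only [Fintype.mem_piFinset] at hk
    simp [mem_product, hk 0, hk 1]
  · intro p hp; simp only [mem_product] at hp
    simp only [Fintype.mem_piFinset]
    intro a; fin_cases a <;> simp [hp.1, hp.2]
  · intro k _; funext a; fin_cases a <;> simp
  · intro p _; simp
  · intro k _; congr 1; funext a; fin_cases a <;> simp

lemma sum_piFinset_one {β : Type*} [AddCommMonoid β] (n : ℕ) (f : (Fin 1 → ℕ) → β) :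
    ∑ k ∈ Fintype.piFinset (fun _ : Fin 1 => range n), f k
      = ∑ a ∈ range n, f (fun _ => a) := by
  refine Finset.sum_nbij' (fun k => k 0) (fun a _ => a) ?_ ?_ ?_ ?_ ?_
  · intro k hk; simp only [Fintype.mem_piFinset] at hk; exact hk 0
  · intro a ha; simp only [Fintype.mem_piFinset]; intro b; exact ha
  · intro k _; funext a; fin_cases a <;> rfl
  · intro a _; rfl
  · intro k _; congr 1; funext a; fin_cases a; rfl

lemma qsInnerSum (d0 d1 b : ℕ) (V : ℕ → ℂ) (hb : b ≤ d0 + d1) :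
    ∑ a ∈ range (d0 + d1 + 1), (if d0 ≤ a ∧ d0 + d1 = a + b then V a else 0)
      = if b ≤ d1 then V (d0 + d1 - b) else 0 := by
  have h : ∀ a ∈ range (d0 + d1 + 1),
      (if d0 ≤ a ∧ d0 + d1 = a + b then V a else 0) =
      if a = d0 + d1 - b then (if b ≤ d1 then V (d0 + d1 - b) else 0) else 0 := by
    intro a ha
    simp only [mem_range] at ha
    rcases eq_or_ne a (d0 + d1 - b) with rfl | hne
    · have hiff : (d0 ≤ d0 + d1 - b ∧ d0 + d1 = d0 + d1 - b + b) ↔ b ≤ d1 := by omega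
      simp [hiff]
    · rw [if_neg hne, if_neg]; rintro ⟨-, h2⟩; omega
  rw [Finset.sum_congr rfl h, Finset.sum_ite_eq' (range (d0 + d1 + 1)) (d0 + d1 - b)]
  rw [if_pos (by simp only [mem_range]; omega)]

lemma qsOuterSum (d0 d1 : ℕ) (g : ℕ → ℂ) :
    ∑ b ∈ range (d0 + d1 + 1), (if b ≤ d1 then g b else 0) = ∑ b ∈ range (d1 + 1), g b := by
  have h1 : ∑ b ∈ range (d1 + 1), (if b ≤ d1 then g b else 0)
      = ∑ b ∈ range (d0 + d1 + 1), (if b ≤ d1 then g b else 0) :=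
    Finset.sum_subset (Finset.range_subset_range.2 (by omega))
      (fun x _ hnx => by rw [if_neg]; simp only [mem_range] at hnx; omega)
  rw [← h1]
  exact Finset.sum_congr rfl fun x hx => by
    simp only [mem_range] at hx; rw [if_pos (by omega)]

lemma neg_pow_smul (f : MvPowerSeries (Fin 2) ℂ) (k : ℕ) :
    (-f) ^ k = ((-1 : ℂ) ^ k) • f ^ k := by
  rw [← neg_one_smul ℂ f, smul_pow]

lemma A_closed (z : List ℕ → ℂ) (d : Fin 2 →₀ ℕ) :
    Zstar z [X 0 + X 1, X 1] d =
      ∑ i ∈ range (d 1 + 1),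
        z [d 0 + d 1 - i, i] * ((-1:ℂ)^(d 0 + d 1) * ((d 0 + d 1 - i).choose (d 0) : ℂ) *
          (((d 0 + d 1 - i).factorial : ℂ))⁻¹ * ((i.factorial : ℂ))⁻¹) := by
  simp only [Zstar, List.length_cons, List.length_nil, Nat.reduceAdd, Fin.sum_univ_two,
    Fin.prod_univ_two, List.get, Fin.isValue]
  rw [sum_piFinset_two]
  rw [Finset.sum_product]
  have key : ∀ a b : ℕ,
      z (List.ofFn ![a, b]) * (MvPowerSeries.coeff d)
        ((((![a,b] 0).factorial : ℂ))⁻¹ • (-(X 0 + X 1 : MvPowerSeries (Fin 2) ℂ)) ^ (![a,b] 0) *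
          (((![a,b] 1).factorial : ℂ))⁻¹ • (-(X 1 : MvPowerSeries (Fin 2) ℂ)) ^ (![a,b] 1)) =
      if d 0 ≤ a ∧ d 0 + d 1 = a + b then
        z [a, b] * ((-1:ℂ)^(a+b) * (a.choose (d 0) : ℂ) *
          ((a.factorial : ℂ))⁻¹ * ((b.factorial : ℂ))⁻¹) else 0 := by
    intro a b
    have hofn : List.ofFn ![a, b] = [a, b] := by simp [List.ofFn_succ]
    simp only [Matrix.cons_val_zero, Matrix.cons_val_one, Matrix.head_cons, hofn]
    rw [neg_pow_smul, neg_pow_smul, smul_smul, smul_smul, smul_mul_smul_comm,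
      MvPowerSeries.coeff_smul, coeff_A]
    split_ifs with hc
    · push_cast; ring
    · simp
  rw [Finset.sum_congr rfl fun a _ => Finset.sum_congr rfl fun b _ => key a b]
  rw [Finset.sum_comm]
  rw [Finset.sum_congr rfl fun b hb => qsInnerSum (d 0) (d 1)
    b _ (by simpa [Nat.lt_succ_iff] using hb)]
  rw [qsOuterSum]
  refine Finset.sum_congr rfl fun i hi => ?_
  simp only [mem_range, Nat.lt_succ_iff] at hi
  have : d 0 + d 1 - i + i = d 0 + d 1 := by omega
  rw [this]

lemma B_closed (z : List ℕ → ℂ) (d : Fin 2 →₀ ℕ) :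
    Zstar z [X 1, X 0 + X 1] d =
      ∑ i ∈ range (d 1 + 1),
        z [i, d 0 + d 1 - i] * ((-1:ℂ)^(d 0 + d 1) * ((d 0 + d 1 - i).choose (d 0) : ℂ) *
          ((i.factorial : ℂ))⁻¹ * (((d 0 + d 1 - i).factorial : ℂ))⁻¹) := by
  simp only [Zstar, List.length_cons, List.length_nil, Nat.reduceAdd, Fin.sum_univ_two,
    Fin.prod_univ_two, List.get, Fin.isValue]
  rw [sum_piFinset_two]
  rw [Finset.sum_product]
  have key : ∀ a b : ℕ,
      z (List.ofFn ![a, b]) * (MvPowerSeries.coeff d)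
        ((((![a,b] 0).factorial : ℂ))⁻¹ • (-(X 1 : MvPowerSeries (Fin 2) ℂ)) ^ (![a,b] 0) *
          (((![a,b] 1).factorial : ℂ))⁻¹ • (-(X 0 + X 1 : MvPowerSeries (Fin 2) ℂ)) ^ (![a,b] 1)) =
      if d 0 ≤ b ∧ d 0 + d 1 = b + a then
        z [a, b] * ((-1:ℂ)^(a+b) * (b.choose (d 0) : ℂ) *
          ((a.factorial : ℂ))⁻¹ * ((b.factorial : ℂ))⁻¹) else 0 := by
    intro a b
    have hofn : List.ofFn ![a, b] = [a, b] := by simp [List.ofFn_succ]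
    simp only [Matrix.cons_val_zero, Matrix.cons_val_one, Matrix.head_cons, hofn]
    rw [neg_pow_smul, neg_pow_smul, smul_smul, smul_smul, smul_mul_smul_comm,
      MvPowerSeries.coeff_smul, coeff_B]
    split_ifs with h1 h2
    · push_cast; ring
    · exfalso; omega
    · exfalso; omega
    · simp
  rw [Finset.sum_congr rfl fun a _ => Finset.sum_congr rfl fun b _ => key a b]
  rw [Finset.sum_congr rfl fun a ha => qsInnerSum (d 0) (d 1)
    a _ (by simpa [Nat.lt_succ_iff] using ha)]
  rw [qsOuterSum]
  refine Finset.sum_congr rfl fun i hi => ?_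
  simp only [mem_range, Nat.lt_succ_iff] at hi
  have h2 : i + (d 0 + d 1 - i) = d 0 + d 1 := by omega
  rw [h2]

lemma C_closed (z : List ℕ → ℂ) (d : Fin 2 →₀ ℕ) :
    Zstar z [X 0 + 2 * X 1] d =
      z [d 0 + d 1] * ((-1:ℂ)^(d 0 + d 1) * ((d 0 + d 1).choose (d 0) : ℂ) * 2 ^ (d 1) *
        (((d 0 + d 1).factorial : ℂ))⁻¹) := by
  simp only [Zstar, List.length_cons, List.length_nil, Nat.reduceAdd, Fin.sum_univ_two,
    Fin.prod_univ_one, List.get, Fin.isValue]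
  rw [sum_piFinset_one]
  have key : ∀ a : ℕ,
      z (List.ofFn (fun _ : Fin 1 => a)) * (MvPowerSeries.coeff d)
        (((a.factorial : ℂ))⁻¹ • (-(X 0 + 2 * X 1 : MvPowerSeries (Fin 2) ℂ)) ^ a) =
      if a = d 0 + d 1 then
        z [d 0 + d 1] * ((-1:ℂ)^(d 0 + d 1) * ((d 0 + d 1).choose (d 0) : ℂ) * 2 ^ (d 1) *
          (((d 0 + d 1).factorial : ℂ))⁻¹) else 0 := by
    intro a
    have hofn : List.ofFn (fun _ : Fin 1 => a) = [a] := by simp [List.ofFn_succ]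
    rw [hofn, neg_pow_smul, smul_smul, MvPowerSeries.coeff_smul, coeff_Cx]
    rcases eq_or_ne a (d 0 + d 1) with rfl | hne
    · rw [if_pos rfl, if_pos rfl]; push_cast; ring
    · rw [if_neg (fun h => hne h.symm), if_neg hne]; simp
  rw [Finset.sum_congr rfl fun a _ => key a, Finset.sum_ite_eq' (range (d 0 + d 1 + 1))]
  rw [if_pos (by simp [mem_range])]

lemma qs_single (a b : ℕ) (z : List ℕ → ℂ) :
    ((qs [a] [b]).map z).sum = z [a, b] + z [b, a] + z [a + b] := by
  rw [qs]; simp [qs]; ring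

lemma fact_id (d0 d1 i : ℕ) (h : i ≤ d1) :
    ((d1.choose i : ℂ)) * (((d0.factorial : ℕ) : ℂ))⁻¹ * (((d1.factorial : ℕ) : ℂ))⁻¹ =
    (((d0 + d1 - i).choose d0 : ℂ)) * ((((d0 + d1 - i).factorial : ℕ) : ℂ))⁻¹ *
      (((i.factorial : ℕ) : ℂ))⁻¹ := by
  have h1 : d1.choose i * i.factorial * (d1 - i).factorial = d1.factorial :=
    Nat.choose_mul_factorial_mul_factorial h
  have h2 : (d0 + d1 - i).choose d0 * d0.factorial * (d1 - i).factorial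
      = (d0 + d1 - i).factorial := by
    have h3 := Nat.choose_mul_factorial_mul_factorial (show d0 ≤ d0 + d1 - i by omega)
    rwa [show d0 + d1 - i - d0 = d1 - i by omega] at h3
  have h3 : d1.choose i * (d0+d1-i).factorial * i.factorial
      = (d0+d1-i).choose d0 * d0.factorial * d1.factorial := by
    have e1 : d1.choose i * (d0+d1-i).factorial * i.factorial * (d1-i).factorial
        = (d0+d1-i).factorial * d1.factorial := by rw [← h1]; ring
    have e2 : (d0+d1-i).choose d0 * d0.factorial * d1.factorial * (d1-i).factorial
        = (d0+d1-i).factorial * d1.factorial := by rw [← h2]; ring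
    exact Nat.eq_of_mul_eq_mul_right (Nat.factorial_pos _) (e1.trans e2.symm)
  have c3 : (d1.choose i : ℂ) * ((d0+d1-i).factorial : ℂ) * (i.factorial : ℂ)
      = ((d0+d1-i).choose d0 : ℂ) * (d0.factorial : ℂ) * (d1.factorial : ℂ) := by
    exact_mod_cast congrArg (Nat.cast (R := ℂ)) h3
  have n1 : ((d0.factorial : ℕ) : ℂ) ≠ 0 := Nat.cast_ne_zero.2 (Nat.factorial_ne_zero _)
  have n2 : ((d1.factorial : ℕ) : ℂ) ≠ 0 := Nat.cast_ne_zero.2 (Nat.factorial_ne_zero _)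
  have n3 : (((d0 + d1 - i).factorial : ℕ) : ℂ) ≠ 0 := Nat.cast_ne_zero.2 (Nat.factorial_ne_zero _)
  have n4 : ((i.factorial : ℕ) : ℂ) ≠ 0 := Nat.cast_ne_zero.2 (Nat.factorial_ne_zero _)
  field_simp
  linear_combination c3

lemma zE_eq (z zE : List ℕ → ℂ)
    (hz : ∀ w w' : List ℕ, z w * z w' = ((qs w w').map z).sum)
    (hzzeta : ∀ k : ℕ, z [k] = riemannZeta (-(k : ℂ)))
    (hE1 : ∀ k : ℕ, zE [k] = riemannZeta (-(k : ℂ)))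
    (hErec : ∀ (w : List ℕ) (a b : ℕ),
      zE (w ++ [a, b]) =
        ∑ p ∈ Finset.HasAntidiagonal.antidiagonal b, (b.choose p.1 : ℂ) * zE [p.1] * zE (w ++ [a + p.2]))
    (a b : ℕ) :
    zE [a, b] = ∑ i ∈ range (b + 1),
      (b.choose i : ℂ) * (z [i, a + b - i] + z [a + b - i, i] + z [a + b]) := by
  have h := hErec [] a b
  simp only [List.nil_append] at h
  rw [h, Finset.Nat.sum_antidiagonal_eq_sum_range_succ_mk]
  refine Finset.sum_congr rfl fun i hi => ?_
  simp only [mem_range, Nat.lt_succ_iff] at hi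
  rw [hE1, hE1, ← hzzeta, ← hzzeta, mul_assoc, hz, qs_single]
  have e1 : a + (b - i) = a + b - i := by omega
  have e2 : i + (a + b - i) = a + b := by omega
  rw [e1, e2]

end Helpers

/-- Depth two instance of the main theorem:
`Z_EMS(t₁,t₂) = Z_*(t₁+t₂, t₂) + Z_*(t₂, t₁+t₂) + Z_*(t₁+2t₂)`. -/
theorem ZEMS_two (z : List ℕ → ℂ) (hz1 : z [] = 1)
    (hz : ∀ w w' : List ℕ, z w * z w' = ((qs w w').map z).sum)
    (hzzeta : ∀ k : ℕ, z [k] = riemannZeta (-(k : ℂ)))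
    (zE : List ℕ → ℂ)
    (hE1 : ∀ k : ℕ, zE [k] = riemannZeta (-(k : ℂ)))
    (hErec : ∀ (w : List ℕ) (a b : ℕ),
      zE (w ++ [a, b]) =
        ∑ p ∈ Finset.HasAntidiagonal.antidiagonal b, (b.choose p.1 : ℂ) * zE [p.1] * zE (w ++ [a + p.2])) :
    ZEMS zE 2 =
      Zstar z [MvPowerSeries.X 0 + MvPowerSeries.X 1, MvPowerSeries.X 1] +
        Zstar z [MvPowerSeries.X 1, MvPowerSeries.X 0 + MvPowerSeries.X 1] +
        Zstar z [MvPowerSeries.X 0 + 2 * MvPowerSeries.X 1] := by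
  refine MvPowerSeries.ext fun d => ?_
  simp only [map_add, MvPowerSeries.coeff_apply]
  rw [A_closed, B_closed, C_closed]
  simp only [ZEMS, Fin.prod_univ_two]
  rw [show List.ofFn (fun i : Fin 2 => d i) = [d 0, d 1] by simp [List.ofFn_succ]]
  rw [zE_eq z zE hz hzzeta hE1 hErec, Finset.sum_mul]
  have hf0 : (((d 0).factorial : ℂ))⁻¹ * (((d 1).factorial : ℂ))⁻¹
      = (((d 0 + d 1).choose (d 0) : ℂ)) * (((d 0 + d 1).factorial : ℂ))⁻¹ := by
    have h := fact_id (d 0) (d 1) 0 (Nat.zero_le _)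
    simpa using h
  have termEq : ∀ i ∈ Finset.range (d 1 + 1),
      ((d 1).choose i : ℂ) * (z [i, d 0 + d 1 - i] + z [d 0 + d 1 - i, i] + z [d 0 + d 1]) *
        ((-1:ℂ)^(d 0) * (((d 0).factorial : ℂ))⁻¹ * ((-1:ℂ)^(d 1) * (((d 1).factorial : ℂ))⁻¹)) =
      z [i, d 0 + d 1 - i] * ((-1:ℂ)^(d 0 + d 1) * (((d 0 + d 1 - i).choose (d 0)) : ℂ) *
          ((i.factorial : ℂ))⁻¹ * (((d 0 + d 1 - i).factorial : ℂ))⁻¹) +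
      z [d 0 + d 1 - i, i] * ((-1:ℂ)^(d 0 + d 1) * (((d 0 + d 1 - i).choose (d 0)) : ℂ) *
          (((d 0 + d 1 - i).factorial : ℂ))⁻¹ * ((i.factorial : ℂ))⁻¹) +
      ((d 1).choose i : ℂ) * (z [d 0 + d 1] * ((-1:ℂ)^(d 0 + d 1) *
          (((d 0 + d 1).choose (d 0)) : ℂ) * (((d 0 + d 1).factorial : ℂ))⁻¹)) := by
    intro i hi
    simp only [Finset.mem_range, Nat.lt_succ_iff] at hi
    have hfi := fact_id (d 0) (d 1) i hi
    linear_combination ((z [i, d 0 + d 1 - i] + z [d 0 + d 1 - i, i]) * (-1:ℂ)^(d 0 + d 1)) * hfi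
      + (((d 1).choose i : ℂ) * z [d 0 + d 1] * (-1:ℂ)^(d 0 + d 1)) * hf0
  rw [Finset.sum_congr rfl termEq, Finset.sum_add_distrib, Finset.sum_add_distrib,
    ← Finset.sum_mul]
  have hchoose : (∑ i ∈ Finset.range (d 1 + 1), ((d 1).choose i : ℂ)) = 2 ^ (d 1) := by
    rw [← Nat.cast_sum, Nat.sum_range_choose]
    push_cast; ring
  rw [hchoose]
  ring
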